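/- Under the hypotheses and notation of the preceding Lyapunov setup (P_1, P_2, W_1, W_2 symmetric positive definite solving the two Lyapunov equations for F̄(π) and F̄(π)+LH̄(π); constants c_1, c_3, c_4 as defined; c_2 := c_1 − c_3 > 0), let δ ∈ (0, c_2). Then for every (z, e) ∈ ℝ^n × ℝ^n with V(z,e) ≤ ((c_2 − δ)/c_4)², the derivative of V along the augmented dynamics satisfies 2 z^⊤P_1 ż + 2 e^⊤P_2 ė ≤ −δ · V(z,e), where ż = A z + B(z^⊤Q z + H̄(π)(z+e)) and ė = (F̄(π)+L H̄(π)) e + (B+L) H̄(π) z + (B+L)(2 z^⊤Q e + e^⊤Q e). -/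

import Mathlib

open Matrix
noncomputable section

/-- Spectral norm: operator norm induced by the Euclidean norms. -/
def opNorm {m n : Type*} [Fintype m] [Fintype n] [DecidableEq n] (M : Matrix m n ℝ) : ℝ :=
  ‖(Matrix.toEuclideanLin M).toContinuousLinearMap‖

/-- Euclidean norm of a real vector. -/
def evnorm {n : Type*} [Fintype n] (v : n → ℝ) : ℝ :=
  Real.sqrt (∑ i, (v i) ^ 2)

set_option linter.unusedSectionVars false
set_option linter.unusedVariables false
set_option maxHeartbeats 1000000

lemma le_of_sq_le_sq' {x y : ℝ} (hx : 0 ≤ x) (hy : 0 ≤ y) (h : x^2 ≤ y^2) : x ≤ y := by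
  nlinarith

section Aux
variable {ι κ : Type*} [Fintype ι] [Fintype κ] [DecidableEq ι] [DecidableEq κ]

lemma evnorm_nonneg (v : ι → ℝ) : 0 ≤ evnorm v := Real.sqrt_nonneg _

lemma evnorm_sq (v : ι → ℝ) : evnorm v ^ 2 = ∑ i, (v i) ^ 2 :=
  Real.sq_sqrt (Finset.sum_nonneg fun i _ => sq_nonneg _)

lemma evnorm_eq_norm (v : ι → ℝ) : evnorm v = ‖(WithLp.equiv 2 (ι → ℝ)).symm v‖ := by
  rw [EuclideanSpace.norm_eq, evnorm]
  congr 1; apply Finset.sum_congr rfl; intro i _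
  simp [Real.norm_eq_abs, sq_abs]

lemma abs_dot_le (v w : ι → ℝ) : |v ⬝ᵥ w| ≤ evnorm v * evnorm w := by
  have h := Finset.sum_mul_sq_le_sq_mul_sq Finset.univ v w
  have h2 : (v ⬝ᵥ w) ^ 2 ≤ (evnorm v * evnorm w) ^ 2 := by
    rw [mul_pow, evnorm_sq, evnorm_sq]; exact h
  have hnn : 0 ≤ evnorm v * evnorm w := mul_nonneg (evnorm_nonneg v) (evnorm_nonneg w)
  nlinarith [abs_nonneg (v ⬝ᵥ w), sq_abs (v ⬝ᵥ w)]

lemma evnorm_mulVec_le (M : Matrix ι κ ℝ) (w : κ → ℝ) :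
    evnorm (M *ᵥ w) ≤ opNorm M * evnorm w := by
  rw [evnorm_eq_norm, evnorm_eq_norm, opNorm]
  have := (Matrix.toEuclideanLin M).toContinuousLinearMap.le_opNorm
    ((WithLp.equiv 2 (κ → ℝ)).symm w)
  simpa using this

lemma abs_dot_mulVec_le (M : Matrix ι κ ℝ) (v : ι → ℝ) (w : κ → ℝ) :
    |v ⬝ᵥ (M *ᵥ w)| ≤ opNorm M * evnorm v * evnorm w := by
  calc |v ⬝ᵥ (M *ᵥ w)| ≤ evnorm v * evnorm (M *ᵥ w) := abs_dot_le _ _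
    _ ≤ evnorm v * (opNorm M * evnorm w) := by
        exact mul_le_mul_of_nonneg_left (evnorm_mulVec_le M w) (evnorm_nonneg v)
    _ = opNorm M * evnorm v * evnorm w := by ring


lemma dot_transpose_mulVec (M : Matrix ι κ ℝ) (v : κ → ℝ) (w : ι → ℝ) :
    v ⬝ᵥ (Mᵀ *ᵥ w) = (M *ᵥ v) ⬝ᵥ w := by
  rw [dotProduct_mulVec, vecMul_transpose, dotProduct_comm]

lemma lyap_dot {F P W : Matrix ι ι ℝ} (hPt : Pᵀ = P) (hLyap : Fᵀ*P + P*F = -W) (z : ι → ℝ) :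
    2 * (z ⬝ᵥ ((P*F) *ᵥ z)) = -(z ⬝ᵥ (W *ᵥ z)) := by
  have h := congrArg (fun M => z ⬝ᵥ (M *ᵥ z)) hLyap
  simp only [add_mulVec, dotProduct_add, neg_mulVec, dotProduct_neg] at h
  have h2 : z ⬝ᵥ ((Fᵀ*P) *ᵥ z) = z ⬝ᵥ ((P*F) *ᵥ z) := by
    rw [← mulVec_mulVec, dot_transpose_mulVec, ← mulVec_mulVec]
    nth_rewrite 2 [← hPt]
    rw [dot_transpose_mulVec, dotProduct_comm]
  linarith [h, h2]

lemma colrow_mulVec (C : Matrix ι (Fin 1) ℝ) (R : Matrix (Fin 1) κ ℝ) (w : κ → ℝ) :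
    (C * R) *ᵥ w = ((fun j => R 0 j) ⬝ᵥ w) • (fun i => C i 0) := by
  funext i
  simp only [mulVec, dotProduct, Matrix.mul_apply, Fin.sum_univ_one, Pi.smul_apply,
    smul_eq_mul, Finset.sum_mul, Finset.mul_sum]
  exact Finset.sum_congr rfl fun j _ => by ring

lemma col_mulVec_one (C : Matrix ι (Fin 1) ℝ) :
    C *ᵥ (fun _ => (1:ℝ)) = fun i => C i 0 := by
  funext i; simp [mulVec, dotProduct, Fin.sum_univ_one]

lemma evnorm_one1 : evnorm (fun _ : Fin 1 => (1:ℝ)) = 1 := by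
  simp [evnorm]

lemma quad_decomp {M : Matrix ι ι ℝ} (hM : M.IsHermitian) (v : ι → ℝ) :
    ∃ w : ι → ℝ, v ⬝ᵥ (M *ᵥ v) = ∑ i, hM.eigenvalues i * (w i)^2 ∧
      ∑ i, (w i)^2 = ∑ i, (v i)^2 := by
  set U : Matrix ι ι ℝ := (hM.eigenvectorUnitary : Matrix ι ι ℝ) with hU
  have hUU : U * star U = 1 := (Matrix.mem_unitaryGroup_iff).mp hM.eigenvectorUnitary.2
  have hsU : star U = Uᵀ := by
    ext i j; simp [Matrix.star_apply]
  refine ⟨v ᵥ* U, ?_, ?_⟩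
  · have hs := hM.spectral_theorem
    have hof : (RCLike.ofReal ∘ hM.eigenvalues : ι → ℝ) = hM.eigenvalues := by
      funext i; simp
    rw [hof, Unitary.conjStarAlgAut_apply] at hs
    conv_lhs => rw [hs]
    rw [← mulVec_mulVec, ← mulVec_mulVec, dotProduct_mulVec (v := v),
      hsU, mulVec_transpose, dotProduct, Finset.sum_congr rfl]
    intro i _
    rw [mulVec_diagonal]; ring
  · have h1 : (v ᵥ* U) ⬝ᵥ (v ᵥ* U) = v ⬝ᵥ v := by
      nth_rewrite 2 [(mulVec_transpose U v).symm]
      rw [← hsU, dotProduct_mulVec, vecMul_vecMul, hUU, vecMul_one]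
    have h2 : ∀ u : ι → ℝ, u ⬝ᵥ u = ∑ i, (u i)^2 := by
      intro u; rw [dotProduct]; exact Finset.sum_congr rfl fun i _ => (sq (u i)).symm
    rw [← h2, ← h2, h1]

lemma rayleigh_lower {M : Matrix ι ι ℝ} (hM : M.IsHermitian) (v : ι → ℝ) :
    (⨅ i, hM.eigenvalues i) * ∑ i, (v i)^2 ≤ v ⬝ᵥ (M *ᵥ v) := by
  obtain ⟨w, hq, hn⟩ := quad_decomp hM v
  rw [hq, ← hn, Finset.mul_sum]
  refine Finset.sum_le_sum fun i _ => ?_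
  exact mul_le_mul_of_nonneg_right
    (ciInf_le (Set.Finite.bddBelow (Set.finite_range _)) i) (sq_nonneg _)

lemma rayleigh_upper {M : Matrix ι ι ℝ} (hM : M.IsHermitian) (v : ι → ℝ) :
    v ⬝ᵥ (M *ᵥ v) ≤ (⨆ i, hM.eigenvalues i) * ∑ i, (v i)^2 := by
  obtain ⟨w, hq, hn⟩ := quad_decomp hM v
  rw [hq, ← hn, Finset.mul_sum]
  refine Finset.sum_le_sum fun i _ => ?_
  exact mul_le_mul_of_nonneg_right
    (le_ciSup (Set.Finite.bddAbove (Set.finite_range _)) i) (sq_nonneg _)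

lemma iInf_eigenvalues_pos [Nonempty ι] {M : Matrix ι ι ℝ} (hM : M.PosDef) :
    0 < ⨅ i, hM.1.eigenvalues i := by
  obtain ⟨j, hj⟩ := Finite.exists_min hM.1.eigenvalues
  exact lt_of_lt_of_le (hM.eigenvalues_pos j) (le_ciInf hj)

end Aux

variable {np nc : ℕ}

/-- `A = [[A_p, B_p C_c],[0, A_c]]`. -/
def Amat (Ap : Matrix (Fin np) (Fin np) ℝ) (Ac : Matrix (Fin nc) (Fin nc) ℝ)
    (Bp : Matrix (Fin np) (Fin 1) ℝ) (Cc : Matrix (Fin 1) (Fin nc) ℝ) :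
    Matrix (Fin np ⊕ Fin nc) (Fin np ⊕ Fin nc) ℝ :=
  Matrix.fromBlocks Ap (Bp * Cc) 0 Ac

/-- `B = [B_p D_c; B_c]`. -/
def Bmat (Bp : Matrix (Fin np) (Fin 1) ℝ) (Bc : Matrix (Fin nc) (Fin 1) ℝ) (Dc : ℝ) :
    Matrix (Fin np ⊕ Fin nc) (Fin 1) ℝ :=
  Matrix.fromRows (Dc • Bp) Bc

/-- `H̄(π) = [2 π^⊤ Q_p, 0]`. -/
def Hbar (Qp : Matrix (Fin np) (Fin np) ℝ) (π : Fin np → ℝ) :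
    Matrix (Fin 1) (Fin np ⊕ Fin nc) ℝ :=
  Matrix.of fun _ j => Sum.elim (fun i => 2 * (π ᵥ* Qp) i) (fun _ => 0) j

/-- `F̄(π) = A + B H̄(π)`. -/
def Fbar (Ap : Matrix (Fin np) (Fin np) ℝ) (Ac : Matrix (Fin nc) (Fin nc) ℝ)
    (Bp : Matrix (Fin np) (Fin 1) ℝ) (Bc : Matrix (Fin nc) (Fin 1) ℝ)
    (Cc : Matrix (Fin 1) (Fin nc) ℝ) (Dc : ℝ)
    (Qp : Matrix (Fin np) (Fin np) ℝ) (π : Fin np → ℝ) :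
    Matrix (Fin np ⊕ Fin nc) (Fin np ⊕ Fin nc) ℝ :=
  Amat Ap Ac Bp Cc + Bmat Bp Bc Dc * Hbar Qp π

/-- `Q = [[Q_p, 0],[0, 0]]`. -/
def Qmat (Qp : Matrix (Fin np) (Fin np) ℝ) :
    Matrix (Fin np ⊕ Fin nc) (Fin np ⊕ Fin nc) ℝ :=
  Matrix.fromBlocks Qp 0 0 0

/-- The closed-loop vector field `ż = Az + B(z^⊤Qz + H̄(π)(z+e))`
(`B` column acting by scalar multiplication). -/
def zdot (Ap : Matrix (Fin np) (Fin np) ℝ) (Ac : Matrix (Fin nc) (Fin nc) ℝ)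
    (Bp : Matrix (Fin np) (Fin 1) ℝ) (Bc : Matrix (Fin nc) (Fin 1) ℝ)
    (Cc : Matrix (Fin 1) (Fin nc) ℝ) (Dc : ℝ)
    (Qp : Matrix (Fin np) (Fin np) ℝ) (π : Fin np → ℝ)
    (z e : Fin np ⊕ Fin nc → ℝ) : Fin np ⊕ Fin nc → ℝ :=
  Amat Ap Ac Bp Cc *ᵥ z +
    (z ⬝ᵥ (Qmat Qp *ᵥ z) + (fun j => Hbar Qp π 0 j) ⬝ᵥ (z + e)) •
      fun i => Bmat Bp Bc Dc i 0

/-- The estimation-error vector field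
`ė = (F̄(π)+LH̄(π))e + (B+L)H̄(π)z + (B+L)(2z^⊤Qe + e^⊤Qe)`. -/
def edot (Ap : Matrix (Fin np) (Fin np) ℝ) (Ac : Matrix (Fin nc) (Fin nc) ℝ)
    (Bp : Matrix (Fin np) (Fin 1) ℝ) (Bc : Matrix (Fin nc) (Fin 1) ℝ)
    (Cc : Matrix (Fin 1) (Fin nc) ℝ) (Dc : ℝ)
    (Qp : Matrix (Fin np) (Fin np) ℝ) (π : Fin np → ℝ)
    (L : Matrix (Fin np ⊕ Fin nc) (Fin 1) ℝ)
    (z e : Fin np ⊕ Fin nc → ℝ) : Fin np ⊕ Fin nc → ℝ :=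
  (Fbar Ap Ac Bp Bc Cc Dc Qp π + L * Hbar Qp π) *ᵥ e +
    ((Bmat Bp Bc Dc + L) * Hbar Qp π) *ᵥ z +
    (2 * (z ⬝ᵥ (Qmat Qp *ᵥ e)) + e ⬝ᵥ (Qmat Qp *ᵥ e)) •
      fun i => (Bmat Bp Bc Dc + L) i 0

/-- inside the sublevel set `V ≤ ((c_2−δ)/c_4)²`, the Lyapunov derivative
satisfies `2z^⊤P_1ż + 2e^⊤P_2ė ≤ −δ V`. -/
theorem lyapunov_decay_in_sublevel_set
    (Ap : Matrix (Fin np) (Fin np) ℝ) (Ac : Matrix (Fin nc) (Fin nc) ℝ)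
    (Bp : Matrix (Fin np) (Fin 1) ℝ) (Bc : Matrix (Fin nc) (Fin 1) ℝ)
    (Cc : Matrix (Fin 1) (Fin nc) ℝ) (Dc : ℝ)
    (Qp : Matrix (Fin np) (Fin np) ℝ) (hQp : Qp.IsSymm)
    (π : Fin np → ℝ) (L : Matrix (Fin np ⊕ Fin nc) (Fin 1) ℝ)
    (W1 W2 P1 P2 : Matrix (Fin np ⊕ Fin nc) (Fin np ⊕ Fin nc) ℝ)
    (hW1 : W1.PosDef) (hW2 : W2.PosDef) (hP1 : P1.PosDef) (hP2 : P2.PosDef)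
    (hLyap1 : (Fbar Ap Ac Bp Bc Cc Dc Qp π)ᵀ * P1 + P1 * Fbar Ap Ac Bp Bc Cc Dc Qp π = -W1)
    (hLyap2 : (Fbar Ap Ac Bp Bc Cc Dc Qp π + L * Hbar Qp π)ᵀ * P2 +
      P2 * (Fbar Ap Ac Bp Bc Cc Dc Qp π + L * Hbar Qp π) = -W2)
    (c1 c3 c4 c2 : ℝ)
    (hc1 : c1 = min (⨅ i, hW1.1.eigenvalues i) (⨅ i, hW2.1.eigenvalues i) /
      max (⨆ i, hP1.1.eigenvalues i) (⨆ i, hP2.1.eigenvalues i))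
    (hc3 : c3 = (2 * opNorm (P1 * Bmat Bp Bc Dc * Hbar Qp π (nc := nc)) +
        2 * opNorm ((Hbar Qp π (nc := nc))ᵀ * (Bmat Bp Bc Dc + L)ᵀ * P2)) /
      Real.sqrt ((⨅ i, hP1.1.eigenvalues i) * (⨅ i, hP2.1.eigenvalues i)))
    (hc4 : c4 =
      2 * opNorm (P1 * Bmat Bp Bc Dc) * opNorm (Qmat Qp (nc := nc)) /
        (⨅ i, hP1.1.eigenvalues i) ^ ((3 : ℝ) / 2) +
      4 * opNorm (P2 * (Bmat Bp Bc Dc + L)) * opNorm (Qmat Qp (nc := nc)) /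
        (Real.sqrt (⨅ i, hP1.1.eigenvalues i) * (⨅ i, hP2.1.eigenvalues i)) +
      2 * opNorm (P2 * (Bmat Bp Bc Dc + L)) * opNorm (Qmat Qp (nc := nc)) /
        (⨅ i, hP2.1.eigenvalues i) ^ ((3 : ℝ) / 2))
    (hc2 : c2 = c1 - c3) (hc2pos : 0 < c2)
    (δ : ℝ) (hδ0 : 0 < δ) (hδ : δ < c2) :
    ∀ z e : Fin np ⊕ Fin nc → ℝ,
      z ⬝ᵥ (P1 *ᵥ z) + e ⬝ᵥ (P2 *ᵥ e) ≤ ((c2 - δ) / c4) ^ 2 →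
      2 * (z ⬝ᵥ (P1 *ᵥ zdot Ap Ac Bp Bc Cc Dc Qp π z e)) +
          2 * (e ⬝ᵥ (P2 *ᵥ edot Ap Ac Bp Bc Cc Dc Qp π L z e)) ≤
        -δ * (z ⬝ᵥ (P1 *ᵥ z) + e ⬝ᵥ (P2 *ᵥ e)) := by
  intro z e hV
  rcases isEmpty_or_nonempty (Fin np ⊕ Fin nc) with hE | hNE
  · simp [dotProduct]
  set Bm := Bmat Bp Bc Dc with hBmdef
  set Hm := Hbar Qp π (nc := nc) with hHmdef
  set Qm := Qmat Qp (nc := nc) with hQmdef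
  set Am := Amat Ap Ac Bp Cc with hAmdef
  set Fb := Fbar Ap Ac Bp Bc Cc Dc Qp π with hFbdef
  set o : Fin 1 → ℝ := fun _ => 1 with ho
  set G := Fb + L * Hm with hGdef
  set N := Hmᵀ * (Bm + L)ᵀ * P2 with hNdef
  have hP1t : P1ᵀ = P1 := by
    rw [← Matrix.conjTranspose_eq_transpose_of_trivial]; exact hP1.1
  have hP2t : P2ᵀ = P2 := by
    rw [← Matrix.conjTranspose_eq_transpose_of_trivial]; exact hP2.1
  have hcfac : ∀ w : (Fin np ⊕ Fin nc) → ℝ,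
      (P1 * Bm * Hm) *ᵥ w = ((fun j => Hm 0 j) ⬝ᵥ w) • ((P1 * Bm) *ᵥ o) := by
    intro w
    rw [colrow_mulVec (P1 * Bm) Hm w, ho, col_mulVec_one]
  have hbfun : (fun i => Bm i 0) = Bm *ᵥ o := by rw [ho, col_mulVec_one]
  have hmfun : (fun i => (Bm + L) i 0) = (Bm + L) *ᵥ o := by rw [ho, col_mulVec_one]
  have hNt : Nᵀ = P2 * ((Bm + L) * Hm) := by
    rw [hNdef, transpose_mul, transpose_mul, transpose_transpose, transpose_transpose,
      hP2t]
  have hFbeq : Fb = Am + Bm * Hm := by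
    rw [hFbdef, hAmdef, hBmdef, hHmdef]; rfl
  set q := opNorm Qm with hq
  set α1 := opNorm (P1 * Bm * Hm) with hα1
  set α2 := opNorm N with hα2
  set β1 := opNorm (P1 * Bm) with hβ1
  set β2 := opNorm (P2 * (Bm + L)) with hβ2
  set lam1 := ⨅ i, hP1.1.eigenvalues i with hlam1
  set lam2 := ⨅ i, hP2.1.eigenvalues i with hlam2
  set mu1 := ⨅ i, hW1.1.eigenvalues i with hmu1
  set mu2 := ⨅ i, hW2.1.eigenvalues i with hmu2
  set Lam1 := ⨆ i, hP1.1.eigenvalues i with hLam1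
  set Lam2 := ⨆ i, hP2.1.eigenvalues i with hLam2
  set nz := evnorm z with hnz
  set ne' := evnorm e with hne'
  set V := z ⬝ᵥ (P1 *ᵥ z) + e ⬝ᵥ (P2 *ᵥ e) with hVdef
  -- positivity facts
  have hlam1p : 0 < lam1 := iInf_eigenvalues_pos hP1
  have hlam2p : 0 < lam2 := iInf_eigenvalues_pos hP2
  have hmu1p : 0 < mu1 := iInf_eigenvalues_pos hW1
  have hmu2p : 0 < mu2 := iInf_eigenvalues_pos hW2
  have hLam1p : lam1 ≤ Lam1 := by
    obtain ⟨i⟩ := hNE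
    exact le_trans (ciInf_le (Set.Finite.bddBelow (Set.finite_range _)) i)
      (le_ciSup (Set.Finite.bddAbove (Set.finite_range _)) i)
  have hLam2p : lam2 ≤ Lam2 := by
    obtain ⟨i⟩ := hNE
    exact le_trans (ciInf_le (Set.Finite.bddBelow (Set.finite_range _)) i)
      (le_ciSup (Set.Finite.bddAbove (Set.finite_range _)) i)
  have hMp : 0 < max Lam1 Lam2 := lt_of_lt_of_le hlam1p (hLam1p.trans (le_max_left _ _))
  -- Rayleigh bounds
  have hr1 : lam1 * nz^2 ≤ z ⬝ᵥ (P1 *ᵥ z) := by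
    have := rayleigh_lower hP1.1 z; rwa [← evnorm_sq] at this
  have hr2 : lam2 * ne'^2 ≤ e ⬝ᵥ (P2 *ᵥ e) := by
    have := rayleigh_lower hP2.1 e; rwa [← evnorm_sq] at this
  have hr1' : z ⬝ᵥ (P1 *ᵥ z) ≤ Lam1 * nz^2 := by
    have := rayleigh_upper hP1.1 z; rwa [← evnorm_sq] at this
  have hr2' : e ⬝ᵥ (P2 *ᵥ e) ≤ Lam2 * ne'^2 := by
    have := rayleigh_upper hP2.1 e; rwa [← evnorm_sq] at this
  have hw1 : mu1 * nz^2 ≤ z ⬝ᵥ (W1 *ᵥ z) := by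
    have := rayleigh_lower hW1.1 z; rwa [← evnorm_sq] at this
  have hw2 : mu2 * ne'^2 ≤ e ⬝ᵥ (W2 *ᵥ e) := by
    have := rayleigh_lower hW2.1 e; rwa [← evnorm_sq] at this
  have hnzn : 0 ≤ nz := evnorm_nonneg z
  have hnen : 0 ≤ ne' := evnorm_nonneg e
  have hzP1 : 0 ≤ z ⬝ᵥ (P1 *ᵥ z) := le_trans (mul_nonneg hlam1p.le (sq_nonneg nz)) hr1
  have heP2 : 0 ≤ e ⬝ᵥ (P2 *ᵥ e) := le_trans (mul_nonneg hlam2p.le (sq_nonneg ne')) hr2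
  have hVnn : 0 ≤ V := add_nonneg hzP1 heP2
  -- the two decompositions
  have hzd : z ⬝ᵥ (P1 *ᵥ zdot Ap Ac Bp Bc Cc Dc Qp π z e)
      = z ⬝ᵥ ((P1 * Fb) *ᵥ z)
        + (z ⬝ᵥ (Qm *ᵥ z)) * (z ⬝ᵥ ((P1 * Bm) *ᵥ o))
        + ((fun j => Hm 0 j) ⬝ᵥ e) * (z ⬝ᵥ ((P1 * Bm) *ᵥ o)) := by
    have hPF : P1 * Fb = P1 * Am + P1 * Bm * Hm := by
      rw [hFbeq, mul_add, Matrix.mul_assoc]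
    simp only [zdot]
    rw [← hAmdef, ← hBmdef, ← hHmdef, ← hQmdef, hbfun, mulVec_add, dotProduct_add,
      mulVec_smul, dotProduct_smul, smul_eq_mul, mulVec_mulVec, mulVec_mulVec,
      dotProduct_add, hPF, add_mulVec, dotProduct_add, hcfac z, dotProduct_smul,
      smul_eq_mul]
    ring
  have hed : e ⬝ᵥ (P2 *ᵥ edot Ap Ac Bp Bc Cc Dc Qp π L z e)
      = e ⬝ᵥ ((P2 * G) *ᵥ e)
        + z ⬝ᵥ (N *ᵥ e)
        + (2 * (z ⬝ᵥ (Qm *ᵥ e)) + e ⬝ᵥ (Qm *ᵥ e)) * (e ⬝ᵥ ((P2 * (Bm + L)) *ᵥ o)) := by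
    have hmid : e ⬝ᵥ ((P2 * ((Bm + L) * Hm)) *ᵥ z) = z ⬝ᵥ (N *ᵥ e) := by
      rw [← hNt, dot_transpose_mulVec, dotProduct_comm]
    simp only [edot]
    rw [← hFbdef, ← hBmdef, ← hHmdef, ← hQmdef, hmfun, mulVec_add, mulVec_add,
      dotProduct_add, dotProduct_add, mulVec_smul, dotProduct_smul, smul_eq_mul,
      mulVec_mulVec, mulVec_mulVec, mulVec_mulVec, ← hGdef, hmid]
  -- Lyapunov
  have hLy1 : 2 * (z ⬝ᵥ ((P1 * Fb) *ᵥ z)) = -(z ⬝ᵥ (W1 *ᵥ z)) :=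
    lyap_dot hP1t hLyap1 z
  have hLy2 : 2 * (e ⬝ᵥ ((P2 * G) *ᵥ e)) = -(e ⬝ᵥ (W2 *ᵥ e)) :=
    lyap_dot hP2t hLyap2 e
  -- norm bounds on the scalar pieces
  have hb1 : |z ⬝ᵥ ((P1 * Bm * Hm) *ᵥ e)| ≤ α1 * nz * ne' := abs_dot_mulVec_le _ z e
  have hb2 : |z ⬝ᵥ (N *ᵥ e)| ≤ α2 * nz * ne' := abs_dot_mulVec_le _ z e
  have hq1 : |z ⬝ᵥ (Qm *ᵥ z)| ≤ q * nz * nz := abs_dot_mulVec_le _ z z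
  have hq2 : |z ⬝ᵥ (Qm *ᵥ e)| ≤ q * nz * ne' := abs_dot_mulVec_le _ z e
  have hq3 : |e ⬝ᵥ (Qm *ᵥ e)| ≤ q * ne' * ne' := abs_dot_mulVec_le _ e e
  have hhe : |(fun j => Hm 0 j) ⬝ᵥ e| ≤ evnorm (fun j => Hm 0 j) * ne' := abs_dot_le _ _
  have hbb1 : |z ⬝ᵥ ((P1 * Bm) *ᵥ o)| ≤ β1 * nz := by
    have := abs_dot_mulVec_le (P1 * Bm) z o
    rwa [ho, evnorm_one1, mul_one] at this
  have hbb2 : |e ⬝ᵥ ((P2 * (Bm + L)) *ᵥ o)| ≤ β2 * ne' := by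
    have := abs_dot_mulVec_le (P2 * (Bm + L)) e o
    rwa [ho, evnorm_one1, mul_one] at this
  have hqn : 0 ≤ q := norm_nonneg _
  have hα1n : 0 ≤ α1 := norm_nonneg _
  have hα2n : 0 ≤ α2 := norm_nonneg _
  have hβ1n : 0 ≤ β1 := norm_nonneg _
  have hβ2n : 0 ≤ β2 := norm_nonneg _
  -- step 1 : c1 bound
  have hc1V : c1 * V ≤ z ⬝ᵥ (W1 *ᵥ z) + e ⬝ᵥ (W2 *ᵥ e) := by
    have hL1nn : (0:ℝ) ≤ Lam1 := le_trans hlam1p.le hLam1p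
    have hL2nn : (0:ℝ) ≤ Lam2 := le_trans hlam2p.le hLam2p
    have hminnn : (0:ℝ) ≤ min mu1 mu2 := le_min hmu1p.le hmu2p.le
    have f1 : min mu1 mu2 * Lam1 ≤ mu1 * max Lam1 Lam2 :=
      mul_le_mul (min_le_left _ _) (le_max_left _ _) hL1nn hmu1p.le
    have f2 : min mu1 mu2 * Lam2 ≤ mu2 * max Lam1 Lam2 :=
      mul_le_mul (min_le_right _ _) (le_max_right _ _) hL2nn hmu2p.le
    have g1 : min mu1 mu2 * Lam1 * nz^2 ≤ mu1 * max Lam1 Lam2 * nz^2 :=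
      mul_le_mul_of_nonneg_right f1 (sq_nonneg nz)
    have g2 : min mu1 mu2 * Lam2 * ne'^2 ≤ mu2 * max Lam1 Lam2 * ne'^2 :=
      mul_le_mul_of_nonneg_right f2 (sq_nonneg ne')
    have g3 : mu1 * nz^2 * max Lam1 Lam2 ≤ (z ⬝ᵥ (W1 *ᵥ z)) * max Lam1 Lam2 :=
      mul_le_mul_of_nonneg_right hw1 hMp.le
    have g4 : mu2 * ne'^2 * max Lam1 Lam2 ≤ (e ⬝ᵥ (W2 *ᵥ e)) * max Lam1 Lam2 :=
      mul_le_mul_of_nonneg_right hw2 hMp.le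
    have h3 : min mu1 mu2 * V ≤ min mu1 mu2 * (Lam1 * nz^2 + Lam2 * ne'^2) :=
      mul_le_mul_of_nonneg_left (by rw [hVdef]; linarith only [hr1', hr2']) hminnn
    rw [hc1, div_mul_eq_mul_div, div_le_iff₀ hMp]
    linarith only [g1, g2, g3, g4, h3]
  -- step 2 : cross terms
  have hcross : 2 * (((fun j => Hm 0 j) ⬝ᵥ e) * (z ⬝ᵥ ((P1 * Bm) *ᵥ o)))
      + 2 * (z ⬝ᵥ (N *ᵥ e)) ≤ c3 * V := by
    have hswap : ((fun j => Hm 0 j) ⬝ᵥ e) * (z ⬝ᵥ ((P1 * Bm) *ᵥ o))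
        = z ⬝ᵥ ((P1 * Bm * Hm) *ᵥ e) := by
      rw [hcfac e, dotProduct_smul, smul_eq_mul]
    rw [hswap]
    have hXle : 2 * (z ⬝ᵥ ((P1 * Bm * Hm) *ᵥ e)) + 2 * (z ⬝ᵥ (N *ᵥ e))
        ≤ (2 * α1 + 2 * α2) * (nz * ne') := by
      have l1 := le_abs_self (z ⬝ᵥ ((P1 * Bm * Hm) *ᵥ e))
      have l2 := le_abs_self (z ⬝ᵥ (N *ᵥ e))
      linarith only [l1, l2, hb1, hb2]
    set a := Real.sqrt (z ⬝ᵥ (P1 *ᵥ z)) with ha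
    set b := Real.sqrt (e ⬝ᵥ (P2 *ᵥ e)) with hb
    have ha2 : a^2 = z ⬝ᵥ (P1 *ᵥ z) := Real.sq_sqrt hzP1
    have hb2' : b^2 = e ⬝ᵥ (P2 *ᵥ e) := Real.sq_sqrt heP2
    have hsa : Real.sqrt lam1 * nz ≤ a :=
      le_of_sq_le_sq' (mul_nonneg (Real.sqrt_nonneg _) hnzn) (Real.sqrt_nonneg _)
        (by rw [mul_pow, Real.sq_sqrt hlam1p.le, ha2]; exact hr1)
    have hsb : Real.sqrt lam2 * ne' ≤ b :=
      le_of_sq_le_sq' (mul_nonneg (Real.sqrt_nonneg _) hnen) (Real.sqrt_nonneg _)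
        (by rw [mul_pow, Real.sq_sqrt hlam2p.le, hb2']; exact hr2)
    have hab : a * b ≤ V := by linarith only [sq_nonneg (a - b), ha2, hb2', hVnn, hVdef.le, hVdef.ge]
    have s12 : Real.sqrt (lam1 * lam2) = Real.sqrt lam1 * Real.sqrt lam2 :=
      Real.sqrt_mul hlam1p.le _
    have s12p : (0:ℝ) < Real.sqrt (lam1 * lam2) :=
      Real.sqrt_pos.mpr (mul_pos hlam1p hlam2p)
    have coeffnn : (0:ℝ) ≤ 2 * α1 + 2 * α2 := by linarith only [hα1n, hα2n]
    rw [hc3, div_mul_eq_mul_div, le_div_iff₀ s12p]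
    calc (2 * (z ⬝ᵥ ((P1 * Bm * Hm) *ᵥ e)) + 2 * (z ⬝ᵥ (N *ᵥ e))) * Real.sqrt (lam1 * lam2)
        ≤ ((2 * α1 + 2 * α2) * (nz * ne')) * Real.sqrt (lam1 * lam2) :=
          mul_le_mul_of_nonneg_right hXle s12p.le
      _ = (2 * α1 + 2 * α2) * ((Real.sqrt lam1 * nz) * (Real.sqrt lam2 * ne')) := by
          rw [s12]; ring
      _ ≤ (2 * α1 + 2 * α2) * (a * b) :=
          mul_le_mul_of_nonneg_left
            (mul_le_mul hsa hsb (mul_nonneg (Real.sqrt_nonneg _) hnen) (Real.sqrt_nonneg _))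
            coeffnn
      _ ≤ (2 * α1 + 2 * α2) * V := mul_le_mul_of_nonneg_left hab coeffnn
  -- step 3 : cubic terms
  have hcub : 2 * ((z ⬝ᵥ (Qm *ᵥ z)) * (z ⬝ᵥ ((P1 * Bm) *ᵥ o)))
      + 2 * ((2 * (z ⬝ᵥ (Qm *ᵥ e)) + e ⬝ᵥ (Qm *ᵥ e)) * (e ⬝ᵥ ((P2 * (Bm + L)) *ᵥ o)))
      ≤ (c2 - δ) * V := by
    set s1 := Real.sqrt lam1 with hs1def
    set s2 := Real.sqrt lam2 with hs2def
    have s1p : (0:ℝ) < s1 := Real.sqrt_pos.mpr hlam1p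
    have s2p : (0:ℝ) < s2 := Real.sqrt_pos.mpr hlam2p
    have hrpow : ∀ x : ℝ, 0 < x → x ^ ((3:ℝ)/2) = (Real.sqrt x)^3 := by
      intro x hx
      rw [Real.sqrt_eq_rpow, ← Real.rpow_natCast (x ^ ((1:ℝ)/2)) 3, ← Real.rpow_mul hx.le]
      norm_num
    have hc4' : c4 = 2*β1*q/s1^3 + 4*β2*q/(s1*s2^2) + 2*β2*q/s2^3 := by
      rw [hc4, hrpow lam1 hlam1p, hrpow lam2 hlam2p, ← hs1def, ← hs2def,
        show lam2 = s2^2 from (Real.sq_sqrt hlam2p.le).symm]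
    have hXY1 : (z ⬝ᵥ (Qm *ᵥ z)) * (z ⬝ᵥ ((P1 * Bm) *ᵥ o)) ≤ (q*nz*nz) * (β1*nz) := by
      calc (z ⬝ᵥ (Qm *ᵥ z)) * (z ⬝ᵥ ((P1 * Bm) *ᵥ o))
          ≤ |(z ⬝ᵥ (Qm *ᵥ z)) * (z ⬝ᵥ ((P1 * Bm) *ᵥ o))| := le_abs_self _
        _ = |z ⬝ᵥ (Qm *ᵥ z)| * |z ⬝ᵥ ((P1 * Bm) *ᵥ o)| := abs_mul _ _
        _ ≤ (q*nz*nz) * (β1*nz) :=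
            mul_le_mul hq1 hbb1 (abs_nonneg _) (le_trans (abs_nonneg _) hq1)
    have habs2 : |2 * (z ⬝ᵥ (Qm *ᵥ e)) + e ⬝ᵥ (Qm *ᵥ e)| ≤ 2*(q*nz*ne') + q*ne'*ne' := by
      have h := abs_add_le (2 * (z ⬝ᵥ (Qm *ᵥ e))) (e ⬝ᵥ (Qm *ᵥ e))
      rw [abs_mul] at h
      have : |(2:ℝ)| = 2 := by norm_num
      rw [this] at h
      linarith only [h, hq2, hq3]
    have hXY2 : (2 * (z ⬝ᵥ (Qm *ᵥ e)) + e ⬝ᵥ (Qm *ᵥ e)) * (e ⬝ᵥ ((P2 * (Bm + L)) *ᵥ o))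
        ≤ (2*(q*nz*ne') + q*ne'*ne') * (β2*ne') := by
      calc (2 * (z ⬝ᵥ (Qm *ᵥ e)) + e ⬝ᵥ (Qm *ᵥ e)) * (e ⬝ᵥ ((P2 * (Bm + L)) *ᵥ o))
          ≤ |(2 * (z ⬝ᵥ (Qm *ᵥ e)) + e ⬝ᵥ (Qm *ᵥ e)) * (e ⬝ᵥ ((P2 * (Bm + L)) *ᵥ o))| :=
            le_abs_self _
        _ = |2 * (z ⬝ᵥ (Qm *ᵥ e)) + e ⬝ᵥ (Qm *ᵥ e)| * |e ⬝ᵥ ((P2 * (Bm + L)) *ᵥ o)| :=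
            abs_mul _ _
        _ ≤ (2*(q*nz*ne') + q*ne'*ne') * (β2*ne') :=
            mul_le_mul habs2 hbb2 (abs_nonneg _) (le_trans (abs_nonneg _) habs2)
    set r := Real.sqrt V with hrdef
    have hr2V : r^2 = V := Real.sq_sqrt hVnn
    have hrn : (0:ℝ) ≤ r := Real.sqrt_nonneg _
    have hs1nz : s1 * nz ≤ r :=
      le_of_sq_le_sq' (mul_nonneg s1p.le hnzn) hrn
        (by rw [mul_pow, hs1def, Real.sq_sqrt hlam1p.le, hr2V, hVdef]; linarith only [hr1, heP2])
    have hs2ne : s2 * ne' ≤ r :=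
      le_of_sq_le_sq' (mul_nonneg s2p.le hnen) hrn
        (by rw [mul_pow, hs2def, Real.sq_sqrt hlam2p.le, hr2V, hVdef]; linarith only [hr2, hzP1])
    have t1 : nz^3 * s1^3 ≤ r^3 := by
      calc nz^3 * s1^3 = (s1*nz)^3 := by ring
        _ ≤ r^3 := pow_le_pow_left₀ (mul_nonneg s1p.le hnzn) hs1nz 3
    have t2 : (nz*ne'^2) * (s1*s2^2) ≤ r^3 := by
      calc (nz*ne'^2) * (s1*s2^2) = (s1*nz) * (s2*ne')^2 := by ring
        _ ≤ r * r^2 :=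
          mul_le_mul hs1nz (pow_le_pow_left₀ (mul_nonneg s2p.le hnen) hs2ne 2)
            (sq_nonneg _) hrn
        _ = r^3 := by ring
    have t3 : ne'^3 * s2^3 ≤ r^3 := by
      calc ne'^3 * s2^3 = (s2*ne')^3 := by ring
        _ ≤ r^3 := pow_le_pow_left₀ (mul_nonneg s2p.le hnen) hs2ne 3
    have hqb1 : (0:ℝ) ≤ 2*(q*β1) := by
      have := mul_nonneg hqn hβ1n; linarith only [this]
    have hqb2 : (0:ℝ) ≤ 4*(q*β2) := by
      have := mul_nonneg hqn hβ2n; linarith only [this]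
    have hqb3 : (0:ℝ) ≤ 2*(q*β2) := by
      have := mul_nonneg hqn hβ2n; linarith only [this]
    have u1 : 2*(q*β1)*nz^3 ≤ 2*β1*q/s1^3 * r^3 := by
      rw [div_mul_eq_mul_div, le_div_iff₀ (pow_pos s1p 3)]
      have := mul_le_mul_of_nonneg_left t1 hqb1
      linarith only [this]
    have u2 : 4*(q*β2)*(nz*ne'^2) ≤ 4*β2*q/(s1*s2^2) * r^3 := by
      rw [div_mul_eq_mul_div, le_div_iff₀ (mul_pos s1p (pow_pos s2p 2))]
      have := mul_le_mul_of_nonneg_left t2 hqb2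
      linarith only [this]
    have u3 : 2*(q*β2)*ne'^3 ≤ 2*β2*q/s2^3 * r^3 := by
      rw [div_mul_eq_mul_div, le_div_iff₀ (pow_pos s2p 3)]
      have := mul_le_mul_of_nonneg_left t3 hqb3
      linarith only [this]
    have key : 2*(q*β1)*nz^3 + 4*(q*β2)*(nz*ne'^2) + 2*(q*β2)*ne'^3 ≤ c4 * r^3 := by
      rw [hc4']; ring_nf; ring_nf at u1 u2 u3; linarith only [u1, u2, u3]
    have hc4nn : (0:ℝ) ≤ c4 := by
      rw [hc4']
      have n1 : (0:ℝ) ≤ 2*β1*q/s1^3 :=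
        div_nonneg (by have := mul_nonneg hβ1n hqn; linarith only [this])
          (pow_nonneg s1p.le 3)
      have n2 : (0:ℝ) ≤ 4*β2*q/(s1*s2^2) :=
        div_nonneg (by have := mul_nonneg hβ2n hqn; linarith only [this])
          (mul_nonneg s1p.le (pow_nonneg s2p.le 2))
      have n3 : (0:ℝ) ≤ 2*β2*q/s2^3 :=
        div_nonneg (by have := mul_nonneg hβ2n hqn; linarith only [this])
          (pow_nonneg s2p.le 3)
      linarith only [n1, n2, n3]
    have hfinal2 : c4 * r^3 ≤ (c2 - δ) * V := by
      rcases eq_or_lt_of_le hc4nn with h0 | hpos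
      · rw [← h0]
        have : (0:ℝ) ≤ (c2 - δ) * V := mul_nonneg (by linarith only [hδ]) hVnn
        linarith only [this]
      · have hq0 : (0:ℝ) ≤ (c2 - δ)/c4 := div_nonneg (by linarith only [hδ]) hc4nn
        have hrle : r ≤ (c2 - δ)/c4 := by
          have h1 : Real.sqrt V ≤ Real.sqrt (((c2 - δ)/c4)^2) := Real.sqrt_le_sqrt hV
          rwa [Real.sqrt_sq hq0, ← hrdef] at h1
        have hc4r : c4 * r ≤ c2 - δ := by
          have := (le_div_iff₀ hpos).mp hrle
          linarith only [this]
        have := mul_le_mul_of_nonneg_right hc4r (sq_nonneg r)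
        calc c4 * r^3 = (c4 * r) * r^2 := by ring
          _ ≤ (c2 - δ) * r^2 := this
          _ = (c2 - δ) * V := by rw [hr2V]
    calc 2 * ((z ⬝ᵥ (Qm *ᵥ z)) * (z ⬝ᵥ ((P1 * Bm) *ᵥ o)))
        + 2 * ((2 * (z ⬝ᵥ (Qm *ᵥ e)) + e ⬝ᵥ (Qm *ᵥ e)) * (e ⬝ᵥ ((P2 * (Bm + L)) *ᵥ o)))
        ≤ 2*(q*β1)*nz^3 + 4*(q*β2)*(nz*ne'^2) + 2*(q*β2)*ne'^3 := by linarith only [hXY1, hXY2]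
      _ ≤ c4 * r^3 := key
      _ ≤ (c2 - δ) * V := hfinal2
  rw [hzd, hed]
  have hfinal : (-c1 + c3 + (c2 - δ)) * V = -δ * V := by rw [hc2]; ring
  linarith only [hLy1, hLy2, hc1V, hcross, hcub, hfinal]
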